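/- Let 𝔛 be a completely regular Hausdorff space, Φ : 𝔛 → 𝔛 continuous with a continuous left-inverse Θ : 𝔛 → 𝔛, and P_𝔛 a set of Radon probability measures on 𝔛 with (Θ_*)⁻¹(P_𝔛) = P_𝔛 (so that the push-forward Φ_* maps P_𝔛 into P_𝔛). Define S_{Φ_*} := {μ ∈ P_𝔛 : (Φⁿ ∘ Θⁿ)_* μ = μ for all n ≥ 1}. Then μ ∈ P_𝔛 belongs to S_{Φ_*} if and only if supp(μ) ⊆ S_Φ. -/

import Mathlib

open Set Filter Topology MeasureTheory

/-- The set of points through which a (bi-infinite) solution of `Φ` passes. -/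
def SolSet {𝔛 : Type*} (Φ : 𝔛 → 𝔛) : Set 𝔛 :=
  {x | ∃ χ : ℤ → 𝔛, χ 0 = x ∧ ∀ t : ℤ, χ (t + 1) = Φ (χ t)}

/-- The support of a measure: the points all of whose open neighborhoods have
strictly positive measure. -/
def measSupp {𝔛 : Type*} [TopologicalSpace 𝔛] [MeasurableSpace 𝔛]
    (μ : Measure 𝔛) : Set 𝔛 :=
  {x | ∀ V : Set 𝔛, IsOpen V → x ∈ V → 0 < μ V}

theorem stmt15 {𝔛 : Type*} [TopologicalSpace 𝔛] [T2Space 𝔛] [CompletelyRegularSpace 𝔛]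
    [MeasurableSpace 𝔛] [BorelSpace 𝔛]
    (Φ : 𝔛 → 𝔛) (hΦc : Continuous Φ)
    -- a continuous left-inverse Θ of Φ
    (Θ : 𝔛 → 𝔛) (hΘc : Continuous Θ) (hΘΦ : Θ ∘ Φ = id)
    -- P_𝔛 : a set of Radon probability measures on 𝔛 with (Θ_*)⁻¹(P_𝔛) = P_𝔛
    (PX : Set (Measure 𝔛))
    (hPXprob : ∀ μ ∈ PX, IsProbabilityMeasure μ)
    (hPXradon : ∀ μ ∈ PX, ∀ s : Set 𝔛, MeasurableSet s →
      μ s = ⨆ (K : Set 𝔛) (_ : K ⊆ s) (_ : IsCompact K), μ K)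
    (hPXinv : (fun μ : Measure 𝔛 => Measure.map Θ μ) ⁻¹' PX = PX)
    (μ : Measure 𝔛) (hμ : μ ∈ PX) :
    -- μ ∈ S_{Φ_*} iff supp(μ) ⊆ S_Φ
    (∀ n : ℕ, 1 ≤ n → Measure.map (Φ^[n] ∘ Θ^[n]) μ = μ) ↔ measSupp μ ⊆ SolSet Φ := by
  have hLI0 : Function.LeftInverse Θ Φ := fun x => congrFun hΘΦ x
  have hLI : ∀ n : ℕ, Function.LeftInverse (Θ^[n]) (Φ^[n]) :=
    fun n => hLI0.iterate n
  have hFc : ∀ n : ℕ, Continuous (Φ^[n] ∘ Θ^[n]) :=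
    fun n => (hΦc.iterate n).comp (hΘc.iterate n)
  have hCclosed : ∀ n : ℕ, IsClosed {y : 𝔛 | Φ^[n] (Θ^[n] y) = y} :=
    fun n => isClosed_eq (hFc n) continuous_id
  have : IsProbabilityMeasure μ := hPXprob μ hμ
  constructor
  · -- invariance implies support in SolSet
    intro h x hx
    have hfix : ∀ n : ℕ, Φ^[n] (Θ^[n] x) = x := by
      intro n
      rcases Nat.eq_zero_or_pos n with h0 | hn
      · simp [h0]
      · by_contra hne
        have hmap := h n hn
        have hC : MeasurableSet {y : 𝔛 | Φ^[n] (Θ^[n] y) = y} := (hCclosed n).measurableSet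
        have h1 : μ {y : 𝔛 | Φ^[n] (Θ^[n] y) = y} = 1 := by
          have hma : Measure.map (Φ^[n] ∘ Θ^[n]) μ {y : 𝔛 | Φ^[n] (Θ^[n] y) = y} =
              μ ((Φ^[n] ∘ Θ^[n]) ⁻¹' {y : 𝔛 | Φ^[n] (Θ^[n] y) = y}) :=
            Measure.map_apply (hFc n).measurable hC
          have hpre : (Φ^[n] ∘ Θ^[n]) ⁻¹' {y : 𝔛 | Φ^[n] (Θ^[n] y) = y} = univ := by
            ext y
            simp only [mem_preimage, mem_univ, iff_true, Function.comp_apply, mem_setOf_eq]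
            rw [hLI n (Θ^[n] y)]
          rw [hmap] at hma
          rw [hma, hpre, measure_univ]
        have h0 : μ {y : 𝔛 | Φ^[n] (Θ^[n] y) = y}ᶜ = 0 := by
          rw [measure_compl hC (measure_ne_top μ _), h1, measure_univ, tsub_self]
        have hpos := hx _ (hCclosed n).isOpen_compl hne
        rw [h0] at hpos
        exact lt_irrefl 0 hpos
    have hstep : ∀ m : ℕ, Φ (Θ^[m + 1] x) = Θ^[m] x := by
      intro m
      have h1 : Θ^[m] (Φ^[m + 1] (Θ^[m + 1] x)) = Θ^[m] x := congrArg _ (hfix (m + 1))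
      rw [Function.iterate_succ_apply, hLI m] at h1
      exact h1
    refine ⟨fun t => if 0 ≤ t then Φ^[t.toNat] x else Θ^[(-t).toNat] x, by simp, ?_⟩
    intro t
    rcases le_or_gt 0 t with ht | ht
    · have h1 : (0 : ℤ) ≤ t + 1 := by omega
      have h2 : (t + 1).toNat = t.toNat + 1 := by omega
      simp only [ht, h1, if_pos, h2, Function.iterate_succ_apply']
    · rcases eq_or_lt_of_le (by omega : t ≤ -1) with he | hlt
      · subst he
        simp only [show ¬ (0:ℤ) ≤ -1 by norm_num, if_neg, not_false_iff, show (-1:ℤ)+1 = 0 by ring,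
          le_refl, if_pos]
        simp only [show ((-(-1:ℤ)).toNat) = 1 by norm_num, Function.iterate_one,
          Int.toNat_zero, Function.iterate_zero, id_eq]
        exact (hstep 0).symm
      · have hn1 : ¬ (0 : ℤ) ≤ t := by omega
        have hn2 : ¬ (0 : ℤ) ≤ t + 1 := by omega
        have h2 : (-t).toNat = (-(t+1)).toNat + 1 := by omega
        simp only [hn1, hn2, if_neg, not_false_iff, h2]
        exact (hstep _).symm
  · -- support in SolSet implies invariance
    intro hsupp n hn
    set C := {y : 𝔛 | Φ^[n] (Θ^[n] y) = y} with hCdef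
    have hsub : measSupp μ ⊆ C := by
      intro x hx
      obtain ⟨χ, hχ0, hχ⟩ := hsupp hx
      have key : ∀ m : ℕ, Φ^[m] (χ (-(m : ℤ))) = x := by
        intro m
        induction m with
        | zero => simpa using hχ0
        | succ k ih =>
          have h1 : χ (-((k : ℤ) + 1) + 1) = Φ (χ (-((k : ℤ) + 1))) := hχ _
          have h2 : (-((k : ℤ) + 1) + 1) = -(k : ℤ) := by ring
          rw [h2] at h1
          have : Φ^[k + 1] (χ (-((k : ℤ) + 1))) = Φ^[k] (χ (-(k : ℤ))) := by
            rw [Function.iterate_succ_apply, ← h1]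
          rw [show (-((k : ℤ) + 1)) = -((k + 1 : ℕ) : ℤ) by push_cast; ring] at this
          rw [this, ih]
      have hΘx : Θ^[n] x = χ (-(n : ℤ)) := by
        rw [← key n, hLI n]
      show Φ^[n] (Θ^[n] x) = x
      rw [hΘx, key n]
    have hμC : μ Cᶜ = 0 := by
      have hopen : IsOpen Cᶜ := (hCclosed n).isOpen_compl
      have hr := hPXradon μ hμ Cᶜ hopen.measurableSet
      rw [hr]
      refine le_antisymm ?_ zero_le
      refine iSup_le fun K => iSup_le fun hK => iSup_le fun hKc => ?_
      have hnull : ∀ y ∈ K, ∃ V : Set 𝔛, IsOpen V ∧ y ∈ V ∧ μ V = 0 := by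
        intro y hy
        have hyns : y ∉ measSupp μ := fun hm => (hK hy) (hsub hm)
        simp only [measSupp, mem_setOf_eq, not_forall] at hyns
        obtain ⟨V, hVo, hVy, hVp⟩ := hyns
        exact ⟨V, hVo, hVy, le_antisymm (not_lt.mp hVp) zero_le⟩
      choose V hVo hVy hV0 using hnull
      obtain ⟨t, ht⟩ := hKc.elim_nhds_subcover' (fun y hy => V y hy)
        (fun y hy => (hVo y hy).mem_nhds (hVy y hy))
      calc μ K ≤ μ (⋃ y ∈ t, V y y.2) := measure_mono ht
        _ ≤ ∑ y ∈ t, μ (V y y.2) := measure_biUnion_finset_le t _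
        _ = 0 := Finset.sum_eq_zero fun y _ => hV0 y y.2
    have hae : (Φ^[n] ∘ Θ^[n]) =ᵐ[μ] id := by
      refine Filter.eventuallyEq_of_mem (?_ : C ∈ ae μ) ?_
      · rw [mem_ae_iff]; exact hμC
      · intro y hy; exact hy
    rw [Measure.map_congr hae, Measure.map_id]
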